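/- Let (S, σ̂) be a permissible coalition. Then there exist n ≥ 2 and a path of remarriages m₁, …, m_n with m₁, …, m_{n−1} ∈ S ∩ M such that σ̂(m_j) = σ(m_{j+1}) for every j = 1, …, n−1, and either m₁ = m_n or both m₁ ∉ V and m_n ∉ V. -/

import Mathlib

open Finset

noncomputable section

/-- Euclidean dot product of two vectors in `ℝ^k`. -/
def dotp {k : ℕ} (x y : Fin k → ℝ) : ℝ := ∑ j, x j * y j

/-- The nonnegative orthant `ℝ^n_{≥0} × ℝ^N_{≥0}`. -/
def Orthant (n N : ℕ) : Set ((Fin n → ℝ) × (Fin N → ℝ)) := {x | 0 ≤ x.1 ∧ 0 ≤ x.2}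

/-- A dataset: prices and incomes for all potential pairs, and aggregate private and
public consumption for all observed couples `(m, σ m)`. -/
structure Dataset (n N : ℕ) (M W : Type) where
  p : M → W → Fin n → ℝ           -- private-good prices for potential pair (m,w)
  PP : M → W → Fin N → ℝ          -- public-good prices for potential pair (m,w)
  y : M → W → ℝ                   -- income of potential pair (m,w)
  q : M → Fin n → ℝ               -- aggregate private consumption of couple (m, σ m)
  Q : M → Fin N → ℝ               -- public consumption of couple (m, σ m)
  p_pos : ∀ m w j, 0 < p m w j
  PP_pos : ∀ m w J, 0 < PP m w J
  y_pos : ∀ m w, 0 < y m w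
  q_nonneg : ∀ m j, 0 ≤ q m j
  Q_nonneg : ∀ m J, 0 ≤ Q m J

/-- A feasible specification of a dataset: private shares for each observed couple and
Lindahl splits of the public-good prices for each potential pair. -/
structure Spec {n N : ℕ} {M W : Type} (D : Dataset n N M W) where
  q1 : M → Fin n → ℝ              -- man's private share in couple (m, σ m)
  q2 : M → Fin n → ℝ              -- woman σ m's private share in couple (m, σ m)
  P1 : M → W → Fin N → ℝ          -- man's Lindahl price for potential pair (m,w)
  P2 : M → W → Fin N → ℝ          -- woman's Lindahl price for potential pair (m,w)
  q1_nonneg : ∀ m j, 0 ≤ q1 m j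
  q2_nonneg : ∀ m j, 0 ≤ q2 m j
  q_add : ∀ m, q1 m + q2 m = D.q m
  P1_pos : ∀ m w J, 0 < P1 m w J
  P2_pos : ∀ m w J, 0 < P2 m w J
  P_add : ∀ m w, P1 m w + P2 m w = D.PP m w

/-- Edge weight `a_{m,w}` of a feasible specification. -/
def edge {n N : ℕ} {M W : Type} (σ : M ≃ W) (D : Dataset n N M W) (F : Spec D)
    (m : M) (w : W) : ℝ :=
  dotp (D.p m w) (F.q1 m + F.q2 (σ.symm w)) + dotp (F.P1 m w) (D.Q m)
    + dotp (F.P2 m w) (D.Q (σ.symm w)) - D.y m w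

/-- `IsRePath len ms`: `ms 0, …, ms (len-1)` is a path of remarriages:
at least two entries, the first `len - 1` entries pairwise distinct, and the last
`len - 1` entries pairwise distinct. -/
def IsRePath {M : Type} (len : ℕ) (ms : ℕ → M) : Prop :=
  2 ≤ len ∧
  (∀ i j, i < len - 1 → j < len - 1 → ms i = ms j → i = j) ∧
  (∀ i j, 1 ≤ i → i < len → 1 ≤ j → j < len → ms i = ms j → i = j)

/-- A path of remarriages is permissible if it is a cycle or neither endpoint
is a committed man. -/
def PermissiblePath {M : Type} (V : Set M) (len : ℕ) (ms : ℕ → M) : Prop :=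
  ms 0 = ms (len - 1) ∨ (ms 0 ∉ V ∧ ms (len - 1) ∉ V)

/-- Path consistency: no permissible path of remarriages has all edge weights ≤ 0
with at least one strict. -/
def PathConsistent {n N : ℕ} {M W : Type} (σ : M ≃ W) (V : Set M)
    (D : Dataset n N M W) (F : Spec D) : Prop :=
  ¬ ∃ (len : ℕ) (ms : ℕ → M), IsRePath len ms ∧ PermissiblePath V len ms ∧
      (∀ j < len - 1, edge σ D F (ms j) (σ (ms (j + 1))) ≤ 0) ∧
      (∃ j < len - 1, edge σ D F (ms j) (σ (ms (j + 1))) < 0)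

/-- Path monotonicity: no permissible path of remarriages has strictly negative
total edge weight. -/
def PathMonotone {n N : ℕ} {M W : Type} (σ : M ≃ W) (V : Set M)
    (D : Dataset n N M W) (F : Spec D) : Prop :=
  ¬ ∃ (len : ℕ) (ms : ℕ → M), IsRePath len ms ∧ PermissiblePath V len ms ∧
      (∑ j ∈ Finset.range (len - 1), edge σ D F (ms j) (σ (ms (j + 1)))) < 0

/-- A utility profile: a continuous, nondecreasing, concave utility on the
nonnegative orthant for every individual. -/
structure UtilProfile (n N : ℕ) (M W : Type) where
  u : M ⊕ W → ((Fin n → ℝ) × (Fin N → ℝ)) → ℝ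
  cont : ∀ i, ContinuousOn (u i) (Orthant n N)
  mono : ∀ i, MonotoneOn (u i) (Orthant n N)
  conc : ∀ i, ConcaveOn ℝ (Orthant n N) (u i)

/-- The pair `(m,w)` is weakly blocking at disposable income `yhat`. -/
def WeakBlock {n N : ℕ} {M W : Type} (σ : M ≃ W) (D : Dataset n N M W) (F : Spec D)
    (U : UtilProfile n N M W) (m : M) (w : W) (yhat : ℝ) : Prop :=
  ∃ (x1 x2 : Fin n → ℝ) (X : Fin N → ℝ),
    (∀ j, 0 ≤ x1 j) ∧ (∀ j, 0 ≤ x2 j) ∧ (∀ J, 0 ≤ X J) ∧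
    dotp (D.p m w) (x1 + x2) + dotp (D.PP m w) X ≤ yhat ∧
    U.u (Sum.inl m) (F.q1 m, D.Q m) ≤ U.u (Sum.inl m) (x1, X) ∧
    U.u (Sum.inr w) (F.q2 (σ.symm w), D.Q (σ.symm w)) ≤ U.u (Sum.inr w) (x2, X)

/-- The pair `(m,w)` is blocking at disposable income `yhat`: weakly blocking with at
least one of the two utility inequalities strict. -/
def Block {n N : ℕ} {M W : Type} (σ : M ≃ W) (D : Dataset n N M W) (F : Spec D)
    (U : UtilProfile n N M W) (m : M) (w : W) (yhat : ℝ) : Prop :=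
  ∃ (x1 x2 : Fin n → ℝ) (X : Fin N → ℝ),
    (∀ j, 0 ≤ x1 j) ∧ (∀ j, 0 ≤ x2 j) ∧ (∀ J, 0 ≤ X J) ∧
    dotp (D.p m w) (x1 + x2) + dotp (D.PP m w) X ≤ yhat ∧
    U.u (Sum.inl m) (F.q1 m, D.Q m) ≤ U.u (Sum.inl m) (x1, X) ∧
    U.u (Sum.inr w) (F.q2 (σ.symm w), D.Q (σ.symm w)) ≤ U.u (Sum.inr w) (x2, X) ∧
    (U.u (Sum.inl m) (F.q1 m, D.Q m) < U.u (Sum.inl m) (x1, X) ∨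
     U.u (Sum.inr w) (F.q2 (σ.symm w), D.Q (σ.symm w)) < U.u (Sum.inr w) (x2, X))

/-- A coalition: a nonempty set `S` of individuals together with a rematching `τ`
that is a bijection between the men of `S` and the women of `S`. -/
structure Coalition (M W : Type) where
  S : Set (M ⊕ W)
  nonempty : S.Nonempty
  τ : M → W
  bij : Set.BijOn τ {m | Sum.inl m ∈ S} {w | Sum.inr w ∈ S}

/-- A coalition is permissible if every member whose observed couple is committed has
their spouse in the coalition. -/
def Coalition.PermissibleC {M W : Type} (C : Coalition M W) (σ : M ≃ W) (V : Set M) :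
    Prop :=
  (∀ m, Sum.inl m ∈ C.S → m ∈ V → Sum.inr (σ m) ∈ C.S) ∧
  (∀ w, Sum.inr w ∈ C.S → σ.symm w ∈ V → Sum.inl (σ.symm w) ∈ C.S)

/-- A coalition blocks without transfers. -/
def Coalition.BlocksNT {n N : ℕ} {M W : Type} (C : Coalition M W) (σ : M ≃ W)
    (D : Dataset n N M W) (F : Spec D) (U : UtilProfile n N M W) : Prop :=
  (∀ m, Sum.inl m ∈ C.S → WeakBlock σ D F U m (C.τ m) (D.y m (C.τ m))) ∧
  (∃ m, Sum.inl m ∈ C.S ∧ Block σ D F U m (C.τ m) (D.y m (C.τ m)))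

/-- A coalition blocks with transfers. -/
def Coalition.BlocksT {n N : ℕ} {M W : Type} (C : Coalition M W) (σ : M ≃ W)
    (D : Dataset n N M W) (F : Spec D) (U : UtilProfile n N M W) : Prop :=
  ∃ t : M → ℝ,
    (∀ m, (Sum.inl m ∉ C.S ∨ Sum.inr (σ m) ∉ C.S) → t m = 0) ∧
    (∀ m, Sum.inl m ∈ C.S →
      WeakBlock σ D F U m (C.τ m) (D.y m (C.τ m) - t m + t (σ.symm (C.τ m)))) ∧
    (∃ m, Sum.inl m ∈ C.S ∧
      Block σ D F U m (C.τ m) (D.y m (C.τ m) - t m + t (σ.symm (C.τ m))))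

/-- Rationalizability with core without transfers. -/
def RationalizableNT {n N : ℕ} {M W : Type} (σ : M ≃ W) (V : Set M)
    (D : Dataset n N M W) : Prop :=
  ∃ (U : UtilProfile n N M W) (F : Spec D),
    ∀ C : Coalition M W, C.PermissibleC σ V → ¬ C.BlocksNT σ D F U

/-- Rationalizability with core with transfers. -/
def RationalizableT {n N : ℕ} {M W : Type} (σ : M ≃ W) (V : Set M)
    (D : Dataset n N M W) : Prop :=
  ∃ (U : UtilProfile n N M W) (F : Spec D),
    ∀ C : Coalition M W, C.PermissibleC σ V → ¬ C.BlocksT σ D F U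

section AuxPath

variable {M : Type}

/-- Cancellation for iterates of a map injective on a set. -/
lemma iter_cancel_aux (g : M → M) (A : Set M)
    (hinj : ∀ a ∈ A, ∀ b ∈ A, g a = g b → a = b) (x : M) :
    ∀ i j, i ≤ j → (∀ k, k < j → g^[k] x ∈ A) → g^[i] x = g^[j] x → x = g^[j - i] x := by
  intro i
  induction i with
  | zero => intro j _ _ h; simpa using h
  | succ i ih =>
    intro j hij hmem h
    obtain ⟨j', rfl⟩ : ∃ j', j = j' + 1 := ⟨j - 1, by omega⟩
    rw [Function.iterate_succ_apply', Function.iterate_succ_apply'] at h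
    have h' : g^[i] x = g^[j'] x :=
      hinj _ (hmem i (by omega)) _ (hmem j' (by omega)) h
    have := ih j' (by omega) (fun k hk => hmem k (by omega)) h'
    simpa [Nat.succ_sub_succ] using this

lemma iter_mod_aux (g : M → M) (x : M) (p : ℕ) (hp : 0 < p) (hx : g^[p] x = x) :
    ∀ a, g^[a] x = g^[a % p] x := by
  intro a
  induction a using Nat.strong_induction_on with
  | _ a ih =>
    rcases lt_or_ge a p with h | h
    · rw [Nat.mod_eq_of_lt h]
    · have h1 : a = (a - p) + p := by omega
      have h2 : g^[a] x = g^[a - p] x := by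
        conv_lhs => rw [h1]
        rw [Function.iterate_add_apply, hx]
      rw [h2, ih (a - p) (by omega)]
      congr 1
      conv_rhs => rw [h1]
      rw [Nat.add_mod_right]

/-- On a chain that eventually leaves `A`, the iterates inside the chain are distinct. -/
lemma iter_distinct_aux (g : M → M) (A : Set M)
    (hinj : ∀ a ∈ A, ∀ b ∈ A, g a = g b → a = b) (x : M) (t : ℕ)
    (hmem : ∀ i, i < t → g^[i] x ∈ A) (hout : g^[t] x ∉ A) :
    ∀ i j, i < t → j < t → g^[i] x = g^[j] x → i = j := by
  have main : ∀ i j, i ≤ j → j < t → g^[i] x = g^[j] x → i = j := by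
    intro i j hij hj h
    have hx := iter_cancel_aux g A hinj x i j hij (fun k hk => hmem k (by omega)) h
    by_contra hne
    have hp : 0 < j - i := by omega
    have hper := iter_mod_aux g x (j - i) hp hx.symm t
    have h1 : t % (j - i) < t := lt_of_lt_of_le (Nat.mod_lt _ hp) (by omega)
    exact hout (by rw [hper]; exact hmem _ h1)
  intro i j hi hj h
  rcases le_total i j with h' | h'
  · exact main i j h' hj h
  · exact (main j i h' hi h.symm).symm

end AuxPath

/-- every permissible coalition contains a path of remarriages
whose rematched pairs `(m_j, σ̂(m_j))` agree with the coalition's rematching, and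
which is either a cycle or has both endpoints non-committed. -/
theorem permissible_coalition_contains_path_of_remarriages
    {M W : Type} [Fintype M] [Fintype W] [Nonempty M] [Nonempty W]
    (σ : M ≃ W) (V : Set M) (C : Coalition M W) (hC : C.PermissibleC σ V) :
    ∃ (len : ℕ) (ms : ℕ → M), IsRePath len ms ∧
      (∀ i, i < len - 1 → Sum.inl (ms i) ∈ C.S) ∧
      (∀ i, i < len - 1 → C.τ (ms i) = σ (ms (i + 1))) ∧
      (ms 0 = ms (len - 1) ∨ (ms 0 ∉ V ∧ ms (len - 1) ∉ V)) := by
  classical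
  set A : Set M := {m | Sum.inl m ∈ C.S} with hAdef
  set g : M → M := fun m => σ.symm (C.τ m) with hgdef
  have hinj : ∀ a ∈ A, ∀ b ∈ A, g a = g b → a = b := by
    intro a ha b hb hab
    exact C.bij.injOn ha hb (σ.symm.injective hab)
  have hstep : ∀ m, C.τ m = σ (g m) := by
    intro m; simp [hgdef]
  have hmaps : ∀ m ∈ A, Sum.inr (C.τ m) ∈ C.S := fun m hm => C.bij.mapsTo hm
  -- backward step
  have hback : ∀ m : M, Sum.inr (σ m) ∈ C.S → ∃ m' ∈ A, g m' = m := by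
    intro m hm
    obtain ⟨m', hm', hτ⟩ := C.bij.surjOn hm
    exact ⟨m', hm', by simp [hgdef, hτ]⟩
  -- A is nonempty
  obtain ⟨m₀, hm₀⟩ : ∃ m, m ∈ A := by
    obtain ⟨i, hi⟩ := C.nonempty
    cases i with
    | inl m => exact ⟨m, hi⟩
    | inr w =>
      obtain ⟨m, hm, _⟩ := C.bij.surjOn hi
      exact ⟨m, hm⟩
  have hτcond : ∀ (x : M) (i : ℕ), C.τ (g^[i] x) = σ (g^[i + 1] x) := by
    intro x i
    rw [hstep]
    congr 1
    exact (Function.iterate_succ_apply' g i x).symm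
  by_cases hall : ∀ k, g^[k] m₀ ∈ A
  · -- cycle case
    have hex : ∃ p, 0 < p ∧ g^[p] m₀ = m₀ := by
      obtain ⟨i, j, hne, hij⟩ := Fintype.exists_ne_map_eq_of_card_lt
        (fun i : Fin (Fintype.card M + 1) => g^[(i : ℕ)] m₀) (by simp)
      have main : ∀ a b : ℕ, a < b → g^[a] m₀ = g^[b] m₀ → ∃ p, 0 < p ∧ g^[p] m₀ = m₀ := by
        intro a b hab h
        have := iter_cancel_aux g A hinj m₀ a b (le_of_lt hab) (fun k _ => hall k) h
        exact ⟨b - a, by omega, this.symm⟩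
      rcases lt_or_gt_of_ne (fun h : (i : ℕ) = (j : ℕ) => hne (Fin.ext h)) with h | h
      · exact main _ _ h hij
      · exact main _ _ h hij.symm
    set p := Nat.find hex with hpdef
    obtain ⟨hppos, hpcyc⟩ := Nat.find_spec hex
    have hmin : ∀ q, 0 < q → q < p → g^[q] m₀ ≠ m₀ := by
      intro q hq1 hq2 h
      exact Nat.find_min hex hq2 ⟨hq1, h⟩
    have hdist : ∀ i j, i ≤ j → j - i < p → 0 < j - i → g^[i] m₀ ≠ g^[j] m₀ := by
      intro i j hij hjp hd h
      have := iter_cancel_aux g A hinj m₀ i j hij (fun k _ => hall k) h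
      exact hmin (j - i) hd hjp this.symm
    refine ⟨p + 1, fun i => g^[i] m₀, ⟨by omega, ?_, ?_⟩, ?_, ?_, ?_⟩
    · intro i j hi hj h
      simp only [Nat.add_sub_cancel] at hi hj
      by_contra hne
      rcases Nat.lt_or_ge i j with h' | h'
      · exact hdist i j (by omega) (by omega) (by omega) h
      · exact hdist j i (by omega) (by omega) (by omega) h.symm
    · intro i j hi1 hi2 hj1 hj2 h
      by_contra hne
      rcases Nat.lt_or_ge i j with h' | h'
      · exact hdist i j (by omega) (by omega) (by omega) h
      · exact hdist j i (by omega) (by omega) (by omega) h.symm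
    · intro i _; exact hall i
    · intro i _; exact hτcond m₀ i
    · left
      simp only [Nat.add_sub_cancel]
      exact hpcyc.symm
  · -- chain case
    push_neg at hall
    set t₀ := Nat.find hall with ht₀def
    have hout₀ : g^[t₀] m₀ ∉ A := Nat.find_spec hall
    have hlt₀ : ∀ k, k < t₀ → g^[k] m₀ ∈ A := by
      intro k hk
      by_contra h
      exact Nat.lt_irrefl _ (lt_of_le_of_lt (Nat.find_le h) hk)
    have ht₀pos : 0 < t₀ := by
      rcases Nat.eq_zero_or_pos t₀ with h | h
      · exfalso; apply hout₀; rw [h]; exact hm₀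
      · exact h
    -- P s : there is a backward chain of length s ending at m₀
    set P : ℕ → Prop := fun s => ∃ x, g^[s] x = m₀ ∧ ∀ i, i ≤ s → g^[i] x ∈ A with hPdef
    have hP0 : P 0 := ⟨m₀, rfl, by intro i hi; interval_cases i; exact hm₀⟩
    have hchain : ∀ (x : M) (s : ℕ), g^[s] x = m₀ → (∀ i, i ≤ s → g^[i] x ∈ A) →
        (∀ i, i < s + t₀ → g^[i] x ∈ A) ∧ g^[s + t₀] x ∉ A := by
      intro x s hx hmem
      constructor
      · intro i hi
        rcases le_or_gt i s with h | h
        · exact hmem i h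
        · have : g^[i] x = g^[i - s] m₀ := by
            rw [← hx, ← Function.iterate_add_apply]
            congr 1; omega
          rw [this]
          exact hlt₀ _ (by omega)
      · have : g^[s + t₀] x = g^[t₀] m₀ := by
          rw [← hx, ← Function.iterate_add_apply]
          congr 1; omega
        rw [this]; exact hout₀
    have hPbound : ∀ s, P s → s ≤ Fintype.card M := by
      intro s hs
      obtain ⟨x, hx, hmem⟩ := hs
      obtain ⟨hmem', hout'⟩ := hchain x s hx hmem
      have hd := iter_distinct_aux g A hinj x (s + t₀) hmem' hout'
      have hinjf : Function.Injective (fun i : Fin (s + t₀) => g^[(i : ℕ)] x) := by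
        intro i j h
        exact Fin.ext (hd _ _ i.isLt j.isLt h)
      have := Fintype.card_le_of_injective _ hinjf
      simp only [Fintype.card_fin] at this
      omega
    set s := Nat.findGreatest P (Fintype.card M) with hsdef
    have hPs : P s := Nat.findGreatest_spec (Nat.zero_le _) hP0
    have hnotP : ¬ P (s + 1) := by
      intro h
      have hb := hPbound _ h
      exact Nat.findGreatest_is_greatest (by
        have := Nat.findGreatest_le (P := P) (Fintype.card M)
        omega) hb h
    obtain ⟨x, hxs, hxmem⟩ := hPs
    obtain ⟨hmem, hout⟩ := hchain x s hxs hxmem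
    set t := s + t₀ with htdef
    have hd := iter_distinct_aux g A hinj x t hmem hout
    refine ⟨t + 1, fun i => g^[i] x, ⟨by omega, ?_, ?_⟩, ?_, ?_, ?_⟩
    · intro i j hi hj h
      simp only [Nat.add_sub_cancel] at hi hj
      exact hd i j hi hj h
    · intro i j hi1 hi2 hj1 hj2 h
      have hi2' : i ≤ t := by omega
      have hj2' : j ≤ t := by omega
      rcases Nat.lt_or_ge i t with h' | h'
      · rcases Nat.lt_or_ge j t with h'' | h''
        · exact hd i j h' h'' h
        · exfalso
          have : j = t := by omega
          subst this
          exact hout (by rw [show g^[t] x = g^[i] x from h.symm]; exact hmem i h')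
      · rcases Nat.lt_or_ge j t with h'' | h''
        · exfalso
          have : i = t := by omega
          subst this
          exact hout (by rw [show g^[t] x = g^[j] x from h]; exact hmem j h'')
        · omega
    · intro i hi
      simp only [Nat.add_sub_cancel] at hi
      exact hmem i hi
    · intro i _; exact hτcond x i
    · right
      simp only [Nat.add_sub_cancel]
      constructor
      · -- start not committed
        intro hV
        have hx0 : x ∈ A := by
          have := hmem 0 (by omega)
          simpa using this
        have hσx : Sum.inr (σ x) ∈ C.S := hC.1 x hx0 hV
        obtain ⟨x', hx', hgx'⟩ := hback x hσx
        apply hnotP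
        refine ⟨x', ?_, ?_⟩
        · rw [Function.iterate_succ_apply, hgx', hxs]
        · intro i hi
          rcases Nat.eq_zero_or_pos i with h | h
          · rw [h]; exact hx'
          · obtain ⟨i', rfl⟩ : ∃ i', i = i' + 1 := ⟨i - 1, by omega⟩
            rw [Function.iterate_succ_apply, hgx']
            exact hxmem i' (by omega)
      · -- end not committed
        intro hV
        apply hout
        have hy : g^[t - 1] x ∈ A := hmem _ (by omega)
        have hτy : Sum.inr (C.τ (g^[t - 1] x)) ∈ C.S := hmaps _ hy
        have heq : C.τ (g^[t - 1] x) = σ (g^[t] x) := by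
          have := hτcond x (t - 1)
          rwa [show t - 1 + 1 = t by omega] at this
        rw [heq] at hτy
        have := hC.2 (σ (g^[t] x)) hτy (by simpa using hV)
        exact (by simpa using this : Sum.inl (g^[t] x) ∈ C.S)
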